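/- For real numbers a, b, c and ωa ≤ ωb with ωa, ωb > 0, the function E(θ) = (ωa/2)[a cos²θ + b sin²θ + c sin(2θ) - 1] + (ωb/2)[b cos²θ + a sin²θ - c sin(2θ) - 1] is minimized over θ ∈ ℝ at θ = (1/2) arctan(2c/(a-b)) if a > b, and at θ = (1/2) arctan(2c/(a-b)) + π/2 if a < b. -/

import Mathlib

/-- Energy after a beam-splitter transformation with angle `θ`. -/
noncomputable def bsEnergy (ωa ωb a b c θ : ℝ) : ℝ :=
  ωa / 2 * (a * Real.cos θ ^ 2 + b * Real.sin θ ^ 2 + c * Real.sin (2 * θ) - 1)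
    + ωb / 2 * (b * Real.cos θ ^ 2 + a * Real.sin θ ^ 2 - c * Real.sin (2 * θ) - 1)

lemma bsEnergy_eq (ωa ωb a b c θ : ℝ) :
    bsEnergy ωa ωb a b c θ =
      ωa / 2 * ((a + b) / 2 - 1) + ωb / 2 * ((a + b) / 2 - 1)
        + (ωa - ωb) / 2 * ((a - b) / 2 * Real.cos (2 * θ) + c * Real.sin (2 * θ)) := by
  unfold bsEnergy
  have h1 := Real.sin_sq_add_cos_sq θ
  rw [Real.cos_two_mul θ]
  linear_combination ((ωa * b + ωb * a) / 2) * h1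

lemma bsBound (A B θ : ℝ) : A * Real.cos θ + B * Real.sin θ ≤ Real.sqrt (A ^ 2 + B ^ 2) := by
  have h1 : A * Real.cos θ + B * Real.sin θ ≤ |A * Real.cos θ + B * Real.sin θ| := le_abs_self _
  have h2 : |A * Real.cos θ + B * Real.sin θ|
      = Real.sqrt ((A * Real.cos θ + B * Real.sin θ) ^ 2) := (Real.sqrt_sq_eq_abs _).symm
  have h3 : (A * Real.cos θ + B * Real.sin θ) ^ 2 ≤ A ^ 2 + B ^ 2 := by
    nlinarith [sq_nonneg (A * Real.sin θ - B * Real.cos θ), Real.sin_sq_add_cos_sq θ]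
  calc A * Real.cos θ + B * Real.sin θ ≤ _ := h1
    _ = _ := h2
    _ ≤ _ := Real.sqrt_le_sqrt h3

lemma bsKey (d c : ℝ) (hd : 0 < d) :
    d / 2 * Real.cos (Real.arctan (2 * c / d)) + c * Real.sin (Real.arctan (2 * c / d))
      = Real.sqrt ((d / 2) ^ 2 + c ^ 2) := by
  set t := 2 * c / d with ht
  rw [Real.cos_arctan, Real.sin_arctan]
  have hu0 : (0:ℝ) < Real.sqrt (1 + t ^ 2) := Real.sqrt_pos.2 (by positivity)
  have hu2 : Real.sqrt (1 + t ^ 2) ^ 2 = 1 + t ^ 2 := Real.sq_sqrt (by positivity)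
  have hR : Real.sqrt ((d / 2) ^ 2 + c ^ 2) = Real.sqrt (1 + t ^ 2) * (d / 2) := by
    rw [show (d / 2) ^ 2 + c ^ 2 = (1 + t ^ 2) * (d / 2) ^ 2 by
      rw [ht]; field_simp]
    rw [Real.sqrt_mul (by positivity), Real.sqrt_sq (by positivity)]
  rw [hR]
  have hd0 : d ≠ 0 := ne_of_gt hd
  have hu0' : Real.sqrt (1 + t ^ 2) ≠ 0 := ne_of_gt hu0
  have hct : t * d = 2 * c := by rw [ht]; field_simp
  field_simp
  linear_combination (-d)*hu2 + (-t)*hct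

/-- The beam-splitter energy is minimized at `θ = (1/2) arctan (2c/(a-b))` if `a > b`,
and at `θ = (1/2) arctan (2c/(a-b)) + π/2` if `a < b`. -/
theorem bsEnergy_min (ωa ωb a b c : ℝ) (hωa : 0 < ωa) (hωb : 0 < ωb) (hω : ωa ≤ ωb) :
    (a > b → ∀ θ : ℝ,
      bsEnergy ωa ωb a b c (1 / 2 * Real.arctan (2 * c / (a - b))) ≤ bsEnergy ωa ωb a b c θ) ∧
    (a < b → ∀ θ : ℝ,
      bsEnergy ωa ωb a b c (1 / 2 * Real.arctan (2 * c / (a - b)) + Real.pi / 2)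
        ≤ bsEnergy ωa ωb a b c θ) := by
  have hω' : (ωa - ωb) / 2 ≤ 0 := by linarith
  constructor
  · intro hab θ
    have hd : 0 < a - b := sub_pos.2 hab
    have hval : (a - b) / 2 * Real.cos (2 * (1 / 2 * Real.arctan (2 * c / (a - b))))
        + c * Real.sin (2 * (1 / 2 * Real.arctan (2 * c / (a - b))))
        = Real.sqrt (((a - b) / 2) ^ 2 + c ^ 2) := by
      rw [show 2 * (1 / 2 * Real.arctan (2 * c / (a - b))) = Real.arctan (2 * c / (a - b))
        by ring]
      exact bsKey (a - b) c hd
    have hb := bsBound ((a - b) / 2) c (2 * θ)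
    rw [bsEnergy_eq, bsEnergy_eq, hval]
    have := mul_le_mul_of_nonpos_left hb hω'
    linarith
  · intro hab θ
    have hd : 0 < b - a := sub_pos.2 hab
    have harg : 2 * c / (a - b) = 2 * (-c) / (b - a) := by
      rw [show a - b = -(b - a) by ring, div_neg, show (2:ℝ) * (-c) = -(2 * c) by ring, neg_div]
    have hval : (a - b) / 2
          * Real.cos (2 * (1 / 2 * Real.arctan (2 * c / (a - b)) + Real.pi / 2))
        + c * Real.sin (2 * (1 / 2 * Real.arctan (2 * c / (a - b)) + Real.pi / 2))
        = Real.sqrt (((a - b) / 2) ^ 2 + c ^ 2) := by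
      rw [show 2 * (1 / 2 * Real.arctan (2 * c / (a - b)) + Real.pi / 2)
          = Real.arctan (2 * c / (a - b)) + Real.pi by ring]
      rw [Real.cos_add_pi, Real.sin_add_pi, harg]
      have hk := bsKey (b - a) (-c) hd
      rw [show ((b - a) / 2) ^ 2 + (-c) ^ 2 = ((a - b) / 2) ^ 2 + c ^ 2 by ring] at hk
      linarith [hk]
    have hb := bsBound ((a - b) / 2) c (2 * θ)
    rw [bsEnergy_eq, bsEnergy_eq, hval]
    have := mul_le_mul_of_nonpos_left hb hω'
    linarith
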